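/- Let K ≥ 1 and let G₁, …, G_K ∈ ℝ^{r×r} be matrices each of whose diagonal entries all equal 1. Let H ∈ ℝ^{r×r} be the entrywise product, H_{ij} = ∏_{k=1}^{K} (G_k)_{ij}. Then ‖H − I_r‖₂ ≤ ∏_{k=1}^{K} ‖G_k − I_r‖₂. -/

import Mathlib

open Matrix

/-- Spectral norm (largest singular value): operator norm of the induced map
between Euclidean spaces. -/
noncomputable def specNorm {m n : Type*} [Fintype m] [Fintype n] [DecidableEq n]
    (M : Matrix m n ℝ) : ℝ :=
  ‖LinearMap.toContinuousLinearMap (Matrix.toEuclideanLin M)‖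

/-- Euclidean norm of a vector. -/
noncomputable def euclNorm {n : Type*} [Fintype n] (x : n → ℝ) : ℝ :=
  Real.sqrt (∑ i, x i ^ 2)

lemma specNorm_nonneg {r : ℕ} (M : Matrix (Fin r) (Fin r) ℝ) : 0 ≤ specNorm M :=
  norm_nonneg _

lemma mulVec_sqrt_le {r : ℕ} (M : Matrix (Fin r) (Fin r) ℝ) (v : Fin r → ℝ) :
    Real.sqrt (∑ i, (M.mulVec v) i ^ 2) ≤ specNorm M * Real.sqrt (∑ i, v i ^ 2) := by
  have h := (LinearMap.toContinuousLinearMap (Matrix.toEuclideanLin M)).le_opNorm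
      ((WithLp.equiv 2 (Fin r → ℝ)).symm v)
  have h1 : (LinearMap.toContinuousLinearMap (Matrix.toEuclideanLin M))
      ((WithLp.equiv 2 (Fin r → ℝ)).symm v)
      = (WithLp.equiv 2 (Fin r → ℝ)).symm (M.mulVec v) := by
    simp [Matrix.toEuclideanLin_toLp, Matrix.toLin'_apply]
  rw [h1] at h
  have hn : ∀ w : Fin r → ℝ, ‖(WithLp.equiv 2 (Fin r → ℝ)).symm w‖
      = Real.sqrt (∑ i, w i ^ 2) := by
    intro w
    rw [EuclideanSpace.norm_eq]
    congr 1
    refine Finset.sum_congr rfl fun i _ => ?_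
    simp [Real.norm_eq_abs, sq_abs]
  rw [hn, hn] at h
  exact h

lemma mulVec_sq_le {r : ℕ} (M : Matrix (Fin r) (Fin r) ℝ) (v : Fin r → ℝ) :
    ∑ i, (M.mulVec v) i ^ 2 ≤ specNorm M ^ 2 * ∑ i, v i ^ 2 := by
  have h := mulVec_sqrt_le M v
  have h1 : (0:ℝ) ≤ ∑ i, (M.mulVec v) i ^ 2 := Finset.sum_nonneg fun i _ => sq_nonneg _
  have h2 : (0:ℝ) ≤ ∑ i, v i ^ 2 := Finset.sum_nonneg fun i _ => sq_nonneg _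
  calc ∑ i, (M.mulVec v) i ^ 2
      = Real.sqrt (∑ i, (M.mulVec v) i ^ 2) ^ 2 := (Real.sq_sqrt h1).symm
    _ ≤ (specNorm M * Real.sqrt (∑ i, v i ^ 2)) ^ 2 := by
        apply pow_le_pow_left₀ (Real.sqrt_nonneg _) h _
    _ = specNorm M ^ 2 * ∑ i, v i ^ 2 := by
        rw [mul_pow, Real.sq_sqrt h2]

lemma specNorm_hadamard_le {r : ℕ} (A B : Matrix (Fin r) (Fin r) ℝ) :
    specNorm (Matrix.hadamard A B) ≤ specNorm A * specNorm B := by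
  have hA := specNorm_nonneg A
  have hB := specNorm_nonneg B
  refine ContinuousLinearMap.opNorm_le_bound _ (mul_nonneg hA hB) fun x => ?_
  set v : Fin r → ℝ := (WithLp.equiv 2 (Fin r → ℝ)) x with hv
  have hx : x = (WithLp.equiv 2 (Fin r → ℝ)).symm v := rfl
  have h1 : (LinearMap.toContinuousLinearMap (Matrix.toEuclideanLin (Matrix.hadamard A B))) x
      = (WithLp.equiv 2 (Fin r → ℝ)).symm ((Matrix.hadamard A B).mulVec v) := by
    rw [hx]
    simp [Matrix.toEuclideanLin_toLp, Matrix.toLin'_apply]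
  rw [h1]
  have hn : ∀ w : Fin r → ℝ, ‖(WithLp.equiv 2 (Fin r → ℝ)).symm w‖
      = Real.sqrt (∑ i, w i ^ 2) := by
    intro w
    rw [EuclideanSpace.norm_eq]
    congr 1
    refine Finset.sum_congr rfl fun i _ => ?_
    simp [Real.norm_eq_abs, sq_abs]
  have hxn : ‖x‖ = Real.sqrt (∑ i, v i ^ 2) := by rw [hx, hn]
  rw [hn, hxn]
  -- core inequality
  set N : Matrix (Fin r) (Fin r) ℝ := Matrix.diagonal v * B.transpose with hN
  set M : Matrix (Fin r) (Fin r) ℝ := A * N with hM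
  have hdiag : ∀ i, (Matrix.hadamard A B).mulVec v i = M i i := by
    intro i
    simp only [hM, hN, Matrix.mulVec, Matrix.mul_apply, dotProduct,
      Matrix.hadamard_apply, Matrix.diagonal_apply, Matrix.transpose_apply,
      ite_mul, zero_mul]
    refine Finset.sum_congr rfl fun j _ => ?_
    rw [Finset.sum_ite_eq]
    simp only [Finset.mem_univ, if_true]
    ring
  have step2 : ∑ i, M i i ^ 2 ≤ ∑ i, ∑ j, M i j ^ 2 := by
    refine Finset.sum_le_sum fun i _ => ?_
    exact Finset.single_le_sum (fun j _ => sq_nonneg (M i j)) (Finset.mem_univ i)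
  have step3 : ∑ i, ∑ j, M i j ^ 2 ≤ specNorm A ^ 2 * ∑ j, ∑ i, N j i ^ 2 := by
    rw [Finset.sum_comm]
    have : ∀ j, ∑ i, M i j ^ 2 ≤ specNorm A ^ 2 * ∑ k, N k j ^ 2 := by
      intro j
      have := mulVec_sq_le A (fun k => N k j)
      have hcol : ∀ i, M i j = A.mulVec (fun k => N k j) i := by
        intro i; simp [hM, Matrix.mul_apply, Matrix.mulVec, dotProduct]
      calc ∑ i, M i j ^ 2 = ∑ i, (A.mulVec (fun k => N k j)) i ^ 2 := by
            refine Finset.sum_congr rfl fun i _ => by rw [hcol]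
        _ ≤ specNorm A ^ 2 * ∑ k, (fun k => N k j) k ^ 2 := this
        _ = specNorm A ^ 2 * ∑ k, N k j ^ 2 := rfl
      -- done
    calc ∑ j, ∑ i, M i j ^ 2 ≤ ∑ j, specNorm A ^ 2 * ∑ k, N k j ^ 2 :=
          Finset.sum_le_sum fun j _ => this j
      _ = specNorm A ^ 2 * ∑ j, ∑ k, N k j ^ 2 := by rw [Finset.mul_sum]
      _ = specNorm A ^ 2 * ∑ k, ∑ j, N k j ^ 2 := by rw [Finset.sum_comm]
  have hNentry : ∀ k i, N k i = v k * B i k := by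
    intro k i
    simp only [hN, Matrix.mul_apply, Matrix.diagonal_apply, Matrix.transpose_apply,
      ite_mul, zero_mul]
    rw [Finset.sum_ite_eq]
    simp
  have step4 : ∑ k, ∑ i, N k i ^ 2 ≤ specNorm B ^ 2 * ∑ i, v i ^ 2 := by
    have hcol : ∀ k, ∑ i, B i k ^ 2 ≤ specNorm B ^ 2 := by
      intro k
      have := mulVec_sq_le B (Pi.single k 1)
      have h1 : ∀ i, (B.mulVec (Pi.single k 1)) i = B i k := by
        intro i
        simp [Matrix.mulVec_single]
      have h2 : ∑ i, (Pi.single k 1 : Fin r → ℝ) i ^ 2 = 1 := by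
        rw [Finset.sum_eq_single k]
        · simp
        · intro b _ hb; simp [Pi.single_eq_of_ne hb]
        · intro h; exact absurd (Finset.mem_univ k) h
      calc ∑ i, B i k ^ 2 = ∑ i, (B.mulVec (Pi.single k 1)) i ^ 2 := by
            refine Finset.sum_congr rfl fun i _ => by rw [h1]
        _ ≤ specNorm B ^ 2 * ∑ i, (Pi.single k 1 : Fin r → ℝ) i ^ 2 := this
        _ = specNorm B ^ 2 := by rw [h2, mul_one]
    calc ∑ k, ∑ i, N k i ^ 2 = ∑ k, v k ^ 2 * ∑ i, B i k ^ 2 := by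
          refine Finset.sum_congr rfl fun k _ => ?_
          rw [Finset.mul_sum]
          refine Finset.sum_congr rfl fun i _ => by rw [hNentry]; ring
      _ ≤ ∑ k, v k ^ 2 * specNorm B ^ 2 :=
          Finset.sum_le_sum fun k _ =>
            mul_le_mul_of_nonneg_left (hcol k) (sq_nonneg _)
      _ = specNorm B ^ 2 * ∑ i, v i ^ 2 := by
          rw [Finset.mul_sum]; exact Finset.sum_congr rfl fun k _ => by ring
  have main : ∑ i, ((Matrix.hadamard A B).mulVec v) i ^ 2
      ≤ (specNorm A * specNorm B) ^ 2 * ∑ i, v i ^ 2 := by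
    calc ∑ i, ((Matrix.hadamard A B).mulVec v) i ^ 2 = ∑ i, M i i ^ 2 := by
          refine Finset.sum_congr rfl fun i _ => by rw [hdiag]
      _ ≤ ∑ i, ∑ j, M i j ^ 2 := step2
      _ ≤ specNorm A ^ 2 * ∑ j, ∑ i, N j i ^ 2 := step3
      _ ≤ specNorm A ^ 2 * (specNorm B ^ 2 * ∑ i, v i ^ 2) :=
          mul_le_mul_of_nonneg_left step4 (sq_nonneg _)
      _ = (specNorm A * specNorm B) ^ 2 * ∑ i, v i ^ 2 := by ring
  have h2 : (0:ℝ) ≤ ∑ i, v i ^ 2 := Finset.sum_nonneg fun i _ => sq_nonneg _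
  have := Real.sqrt_le_sqrt main
  rw [Real.sqrt_mul (sq_nonneg _), Real.sqrt_sq (mul_nonneg hA hB)] at this
  exact this

lemma specNorm_hadamard_prod_le {r : ℕ} : ∀ {K : ℕ}
    (M : Fin (K + 1) → Matrix (Fin r) (Fin r) ℝ),
    specNorm (Matrix.of fun i j => ∏ k, M k i j) ≤ ∏ k, specNorm (M k) := by
  intro K
  induction K with
  | zero =>
    intro M
    have : (Matrix.of fun i j => ∏ k : Fin 1, M k i j) = M 0 := by
      ext i j; simp [Fin.prod_univ_one]
    rw [this, Fin.prod_univ_one]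
  | succ n ih =>
    intro M
    have key : (Matrix.of fun i j => ∏ k : Fin (n + 2), M k i j)
        = Matrix.hadamard (M 0) (Matrix.of fun i j => ∏ k : Fin (n + 1), M k.succ i j) := by
      ext i j
      simp [Matrix.hadamard_apply, Fin.prod_univ_succ]
    rw [key, Fin.prod_univ_succ]
    calc specNorm (Matrix.hadamard (M 0) (Matrix.of fun i j => ∏ k : Fin (n+1), M k.succ i j))
        ≤ specNorm (M 0) * specNorm (Matrix.of fun i j => ∏ k : Fin (n+1), M k.succ i j) :=
          specNorm_hadamard_le _ _
      _ ≤ specNorm (M 0) * ∏ k : Fin (n+1), specNorm (M k.succ) :=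
          mul_le_mul_of_nonneg_left (ih _) (specNorm_nonneg _)

theorem stmt_12 {K r : ℕ} (hK : 1 ≤ K) (G : Fin K → Matrix (Fin r) (Fin r) ℝ)
    (hdiag : ∀ k i, G k i i = 1) :
    specNorm ((Matrix.of fun i j => ∏ k, G k i j) - 1) ≤ ∏ k, specNorm (G k - 1) := by
  obtain ⟨K', rfl⟩ : ∃ K', K = K' + 1 := ⟨K - 1, (Nat.succ_pred_eq_of_pos hK).symm⟩
  have key : ((Matrix.of fun i j => ∏ k, G k i j) - 1)
      = (Matrix.of fun i j => ∏ k, (G k - 1) i j) := by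
    ext i j
    by_cases h : i = j
    · subst h
      simp [Matrix.sub_apply, Matrix.one_apply, hdiag]
    · simp [Matrix.sub_apply, Matrix.one_apply, h]
  rw [key]
  exact specNorm_hadamard_prod_le (fun k => G k - 1)
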